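/- Let d ≥ 2, let U ⊆ ℝ^d be a U-shaped closed convex set with nonempty interior, let ε > 0, let q be a frontier point of U, and let h be a non-vertical supporting hyperplane of U at q, written h = {x ∈ ℝ^d : x_d = ⟨p̂, x̂⟩ − p_d} for a point p ∈ ℝ^d (so p_d = ⟨p̂, q̂⟩ − q_d). Then π(DBase) − q̂ = ε (π(CBase) − p̂)°; explicitly, π(DBase) − q̂ = {x ∈ ℝ^{d−1} : ⟨x, ŷ − p̂⟩ ≤ ε for all y ∈ CBase}. -/

import Mathlib

open MeasureTheory Metric Set
open scoped RealInnerProductSpace ENNReal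

noncomputable section

/-- Vertical projection `ℝ^d = ℝ^{d-1} × ℝ → ℝ^{d-1}` (forget the last coordinate). -/
def vproj (n : ℕ) (x : EuclideanSpace ℝ (Fin (n + 1))) : EuclideanSpace ℝ (Fin n) :=
  WithLp.toLp 2 (fun (j : Fin n) => x j.castSucc)

/-- The last standard basis vector `e_d` of `ℝ^d` (`d = n + 1`). -/
def ed (n : ℕ) : EuclideanSpace ℝ (Fin (n + 1)) := EuclideanSpace.single (Fin.last n) 1

/-- The projective dual of a U-shaped closed convex set. -/
def Udual {n : ℕ} (U : Set (EuclideanSpace ℝ (Fin (n + 1)))) :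
    Set (EuclideanSpace ℝ (Fin (n + 1))) :=
  {y | ∀ z ∈ U, ⟪vproj n y, vproj n z⟫ - z (Fin.last n) ≤ y (Fin.last n)}

namespace DualCapAux

variable {n : ℕ}

def ext' (v : EuclideanSpace ℝ (Fin n)) (t : ℝ) : EuclideanSpace ℝ (Fin (n+1)) :=
  WithLp.toLp 2 (Fin.snoc (α := fun _ => ℝ) (fun j => v j) t)

lemma vproj_ext (v : EuclideanSpace ℝ (Fin n)) (t : ℝ) : vproj n (ext' v t) = v := by
  ext j; simp [vproj, ext']

lemma ext_last (v : EuclideanSpace ℝ (Fin n)) (t : ℝ) : ext' v t (Fin.last n) = t := by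
  simp [ext']

lemma inner_split (a b : EuclideanSpace ℝ (Fin (n+1))) :
    ⟪a, b⟫ = ⟪vproj n a, vproj n b⟫ + a (Fin.last n) * b (Fin.last n) := by
  simp [PiLp.inner_apply, RCLike.inner_apply, vproj, Fin.sum_univ_castSucc, mul_comm]

lemma vproj_add_smul_ed (x : EuclideanSpace ℝ (Fin (n+1))) (t : ℝ) :
    vproj n (x + t • ed n) = vproj n x := by
  ext j
  simp [vproj, ed, EuclideanSpace.single_apply, (Fin.castSucc_lt_last j).ne]

lemma last_add_smul_ed (x : EuclideanSpace ℝ (Fin (n+1))) (t : ℝ) :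
    (x + t • ed n) (Fin.last n) = x (Fin.last n) + t := by
  simp [ed, EuclideanSpace.single_apply]

lemma vproj_sub_smul_ed (x : EuclideanSpace ℝ (Fin (n+1))) (t : ℝ) :
    vproj n (x - t • ed n) = vproj n x := by
  ext j
  simp [vproj, ed, EuclideanSpace.single_apply, (Fin.castSucc_lt_last j).ne]

lemma last_sub_smul_ed (x : EuclideanSpace ℝ (Fin (n+1))) (t : ℝ) :
    (x - t • ed n) (Fin.last n) = x (Fin.last n) - t := by
  simp [ed, EuclideanSpace.single_apply]

lemma halfspace_closure_hull {A : Set (EuclideanSpace ℝ (Fin (n+1)))}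
    {y : EuclideanSpace ℝ (Fin n)} {c : ℝ}
    (hA : ∀ z ∈ A, ⟪y, vproj n z⟫ - z (Fin.last n) ≤ c) :
    ∀ z ∈ closure (convexHull ℝ A), ⟪y, vproj n z⟫ - z (Fin.last n) ≤ c := by
  set v := ext' y (-1) with hv
  have hform : ∀ z : EuclideanSpace ℝ (Fin (n+1)),
      ⟪v, z⟫ = ⟪y, vproj n z⟫ - z (Fin.last n) := by
    intro z
    rw [hv, inner_split, vproj_ext, ext_last]; ring
  have hsub : closure (convexHull ℝ A) ⊆ {z | ⟪v, z⟫ ≤ c} := by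
    apply closure_minimal
    · apply convexHull_min
      · intro z hz; simpa [hform] using hA z hz
      · exact (convex_Iic c).linear_preimage (innerSL ℝ v).toLinearMap
    · exact IsClosed.preimage (innerSL ℝ v).continuous isClosed_Iic
  intro z hz
  have := hsub hz
  simpa [hform] using this

end DualCapAux

open DualCapAux

set_option maxHeartbeats 1000000 in
/-- the projected base of the `ε`-dual cap of `U` at `q` equals, after
translating by `−q̂`, the `ε`-scaled polar of the translated projected base of the
corresponding `ε`-cap of the projective dual `U*`. -/
theorem dual_cap_base_polar (n : ℕ) (hn : 1 ≤ n)
    (U : Set (EuclideanSpace ℝ (Fin (n + 1)))) (hUcl : IsClosed U) (hUconv : Convex ℝ U)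
    (hUint : (interior U).Nonempty)
    (hUsh : ∀ x ∈ U, ∀ t : ℝ, 0 ≤ t → x + t • ed n ∈ U)
    (ε : ℝ) (hε : 0 < ε)
    (q : EuclideanSpace ℝ (Fin (n + 1))) (hq : q ∈ frontier U)
    (p : EuclideanSpace ℝ (Fin (n + 1)))
    (hqh : q (Fin.last n) = ⟪vproj n p, vproj n q⟫ - p (Fin.last n))
    (hsupp : (∀ x ∈ U, ⟪vproj n p, vproj n x⟫ - p (Fin.last n) ≤ x (Fin.last n)) ∨
             (∀ x ∈ U, x (Fin.last n) ≤ ⟪vproj n p, vproj n x⟫ - p (Fin.last n))) :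
    (fun v => v - vproj n q) ''
        (vproj n ''
          ({x | x (Fin.last n) = ⟪vproj n p, vproj n x⟫ - p (Fin.last n)} ∩
            closure (convexHull ℝ (U ∪ {q - ε • ed n}))))
      = {x : EuclideanSpace ℝ (Fin n) |
          ∀ y ∈ Udual U ∩
              {y : EuclideanSpace ℝ (Fin (n + 1)) |
                y (Fin.last n) = ⟪vproj n q, vproj n y⟫ - q (Fin.last n) + ε},
            ⟪x, vproj n y - vproj n p⟫ ≤ ε} := by
  obtain ⟨x0, hx0i⟩ := hUint
  have hx0U : x0 ∈ U := interior_subset hx0i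
  have hP : ∀ x ∈ U, ⟪vproj n p, vproj n x⟫ - p (Fin.last n) ≤ x (Fin.last n) := by
    rcases hsupp with h | h
    · exact h
    · exfalso
      set t := max 0 (⟪vproj n p, vproj n x0⟫ - p (Fin.last n) - x0 (Fin.last n) + 1) with ht
      have ht0 : (0:ℝ) ≤ t := le_max_left _ _
      have h1 := h _ (hUsh x0 hx0U t ht0)
      rw [last_add_smul_ed, vproj_add_smul_ed] at h1
      have ht1 : ⟪vproj n p, vproj n x0⟫ - p (Fin.last n) - x0 (Fin.last n) + 1 ≤ t :=
        le_max_right _ _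
      linarith
  set V := closure (convexHull ℝ (U ∪ {q - ε • ed n})) with hVdef
  have hUV : U ⊆ V :=
    (Set.subset_union_left.trans (subset_convexHull ℝ _)).trans subset_closure
  have hqεV : q - ε • ed n ∈ V :=
    subset_closure (subset_convexHull ℝ _ (Set.mem_union_right _ (Set.mem_singleton _)))
  apply Set.eq_of_subset_of_subset
  · rintro x ⟨a, ⟨w, ⟨hwh, hwV⟩, rfl⟩, rfl⟩
    intro y hy
    obtain ⟨hyU, hyc⟩ := hy
    simp only [Set.mem_setOf_eq] at hyc hwh
    have hhalf : ∀ z ∈ U ∪ {q - ε • ed n},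
        ⟪vproj n y, vproj n z⟫ - z (Fin.last n) ≤ y (Fin.last n) := by
      rintro z (hz | rfl)
      · exact hyU z hz
      · rw [vproj_sub_smul_ed, last_sub_smul_ed, hyc]
        have := real_inner_comm (vproj n q) (vproj n y)
        linarith
    have hw := halfspace_closure_hull hhalf w hwV
    rw [inner_sub_left, inner_sub_right, inner_sub_right]
    have c1 := real_inner_comm (vproj n w) (vproj n y)
    have c2 := real_inner_comm (vproj n p) (vproj n w)
    have c4 := real_inner_comm (vproj n q) (vproj n p)
    linarith
  · intro x hx
    simp only [Set.mem_setOf_eq] at hx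
    set xh := x + vproj n q with hxh
    set w := ext' xh (⟪vproj n p, xh⟫ - p (Fin.last n)) with hwdef
    have hwproj : vproj n w = xh := vproj_ext _ _
    have hwlast : w (Fin.last n) = ⟪vproj n p, xh⟫ - p (Fin.last n) := ext_last _ _
    have hwV : w ∈ V := by
      by_contra hwV
      obtain ⟨f, u, hfV, hfw⟩ := geometric_hahn_banach_closed_point
        ((convex_convexHull ℝ _).closure) isClosed_closure hwV
      set v := (InnerProductSpace.toDual ℝ (EuclideanSpace ℝ (Fin (n+1)))).symm f with hv
      have hfv : ∀ z, f z = ⟪v, z⟫ := fun z =>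
        (InnerProductSpace.toDual_symm_apply).symm
      have hVs : ∀ z ∈ V, ⟪vproj n v, vproj n z⟫ + v (Fin.last n) * z (Fin.last n) < u := by
        intro z hz; have := hfV z hz; rwa [hfv, inner_split] at this
      have hws : u < ⟪vproj n v, xh⟫ + v (Fin.last n) * w (Fin.last n) := by
        have h := hfw; rw [hfv, inner_split, hwproj] at h; exact h
      have hvl : v (Fin.last n) ≤ 0 := by
        by_contra hvl
        push_neg at hvl
        have h1 := hVs x0 (hUV hx0U)
        set t := (u - (⟪vproj n v, vproj n x0⟫ + v (Fin.last n) * x0 (Fin.last n)))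
            / v (Fin.last n) with htdef
        have ht0 : 0 ≤ t := le_of_lt (div_pos (by linarith) hvl)
        have h2 := hVs _ (hUV (hUsh x0 hx0U t ht0))
        rw [vproj_add_smul_ed, last_add_smul_ed, mul_add] at h2
        have hvt : v (Fin.last n) * t
            = u - (⟪vproj n v, vproj n x0⟫ + v (Fin.last n) * x0 (Fin.last n)) := by
          rw [htdef, mul_div_cancel₀ _ (ne_of_gt hvl)]
        linarith
      obtain ⟨ya, c, hVc, hwc⟩ :
          ∃ (ya : EuclideanSpace ℝ (Fin n)) (c : ℝ),
            (∀ z ∈ V, ⟪ya, vproj n z⟫ - z (Fin.last n) ≤ c) ∧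
            c < ⟪ya, xh⟫ - w (Fin.last n) := by
        rcases lt_or_eq_of_le hvl with hvl' | hvl0
        · have hne : v (Fin.last n) ≠ 0 := ne_of_lt hvl'
          have hα : 0 < (-(v (Fin.last n)))⁻¹ := inv_pos.mpr (by linarith)
          have hαvl : (-(v (Fin.last n)))⁻¹ * v (Fin.last n) = -1 := by
            have h := inv_mul_cancel₀ (neg_ne_zero.mpr hne)
            linarith [h]
          refine ⟨(-(v (Fin.last n)))⁻¹ • vproj n v, (-(v (Fin.last n)))⁻¹ * u, ?_, ?_⟩
          · intro z hz
            have h1 := hVs z hz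
            rw [real_inner_smul_left]
            have key : (-(v (Fin.last n)))⁻¹
                * (⟪vproj n v, vproj n z⟫ + v (Fin.last n) * z (Fin.last n))
                = (-(v (Fin.last n)))⁻¹ * ⟪vproj n v, vproj n z⟫ - z (Fin.last n) := by
              rw [mul_add, ← mul_assoc, hαvl]; ring
            linarith [mul_lt_mul_of_pos_left h1 hα]
          · rw [real_inner_smul_left]
            have key : (-(v (Fin.last n)))⁻¹
                * (⟪vproj n v, xh⟫ + v (Fin.last n) * w (Fin.last n))
                = (-(v (Fin.last n)))⁻¹ * ⟪vproj n v, xh⟫ - w (Fin.last n) := by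
              rw [mul_add, ← mul_assoc, hαvl]; ring
            linarith [mul_lt_mul_of_pos_left hws hα]
        · have hPV : ∀ z ∈ V, ⟪vproj n p, vproj n z⟫ - z (Fin.last n)
              ≤ p (Fin.last n) + ε := by
            apply halfspace_closure_hull
            rintro z (hz | rfl)
            · have := hP z hz; linarith
            · rw [vproj_sub_smul_ed, last_sub_smul_ed]
              linarith [hqh]
          have hD : 0 < ⟪vproj n v, xh⟫ - u := by
            rw [hvl0, zero_mul, add_zero] at hws; linarith
          set δ := (⟪vproj n v, xh⟫ - u) / (2 * ε) with hδdef
          have hδ : 0 < δ := div_pos hD (by linarith)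
          refine ⟨δ⁻¹ • vproj n v + vproj n p, δ⁻¹ * u + p (Fin.last n) + ε, ?_, ?_⟩
          · intro z hz
            have h1 := hVs z hz
            rw [hvl0, zero_mul, add_zero] at h1
            have h2 := hPV z hz
            rw [inner_add_left, real_inner_smul_left]
            have := mul_le_mul_of_nonneg_left h1.le (inv_nonneg.mpr hδ.le)
            linarith
          · rw [inner_add_left, real_inner_smul_left, hwlast]
            have key : δ⁻¹ * (⟪vproj n v, xh⟫ - u) = 2 * ε := by
              rw [hδdef, inv_div, div_mul_cancel₀ _ (ne_of_gt hD)]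
            linarith [key, hε]
      have hMε : ε ≤ c - ⟪ya, vproj n q⟫ + q (Fin.last n) := by
        have h := hVc _ hqεV
        rw [vproj_sub_smul_ed, last_sub_smul_ed] at h
        linarith
      set M := c - ⟪ya, vproj n q⟫ + q (Fin.last n) with hM
      have hM0 : 0 < M := lt_of_lt_of_le hε hMε
      set s := ε / M with hs
      have hs0 : 0 < s := div_pos hε hM0
      have hs1 : s ≤ 1 := (div_le_one hM0).mpr hMε
      have hsM : s * M = ε := div_mul_cancel₀ ε (ne_of_gt hM0)
      have hsM' : s * c - s * ⟪ya, vproj n q⟫ + s * q (Fin.last n) = ε := by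
        rw [← hsM, hM]; ring
      set ya' := vproj n p + s • (ya - vproj n p) with hya'
      set Y := ext' ya' (⟪vproj n q, ya'⟫ - q (Fin.last n) + ε) with hY
      have hYproj : vproj n Y = ya' := vproj_ext _ _
      have hYlast : Y (Fin.last n) = ⟪vproj n q, ya'⟫ - q (Fin.last n) + ε := ext_last _ _
      have e2 : ⟪vproj n q, ya'⟫
          = ⟪vproj n p, vproj n q⟫ + s * (⟪ya, vproj n q⟫ - ⟪vproj n p, vproj n q⟫) := by
        rw [hya', inner_add_right, real_inner_smul_right, inner_sub_right,
          real_inner_comm (vproj n q) ya, real_inner_comm (vproj n q) (vproj n p)]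
      have hYdual : Y ∈ Udual U := by
        intro z hz
        rw [hYproj, hYlast, e2]
        have h1 := hVc z (hUV hz)
        have h2 := hP z hz
        have e1 : ⟪ya', vproj n z⟫ = ⟪vproj n p, vproj n z⟫
            + s * (⟪ya, vproj n z⟫ - ⟪vproj n p, vproj n z⟫) := by
          rw [hya', inner_add_left, real_inner_smul_left, inner_sub_left]
        rw [e1]
        have h2' : ⟪vproj n p, vproj n z⟫ - z (Fin.last n) ≤ p (Fin.last n) := by linarith
        have m1 := mul_le_mul_of_nonneg_left h1 hs0.le
        have m2 := mul_le_mul_of_nonneg_left h2' (by linarith : (0:ℝ) ≤ 1 - s)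
        have hqhs : s * q (Fin.last n)
            = s * ⟪vproj n p, vproj n q⟫ - s * p (Fin.last n) := by
          rw [hqh]; ring
        linarith [m1, m2, hsM', hqh, hqhs]
      have hYmem : Y ∈ {y : EuclideanSpace ℝ (Fin (n + 1)) |
          y (Fin.last n) = ⟪vproj n q, vproj n y⟫ - q (Fin.last n) + ε} := by
        simp only [Set.mem_setOf_eq]
        rw [hYlast, hYproj]
      have hxY := hx Y ⟨hYdual, hYmem⟩
      rw [hYproj] at hxY
      have hdiff : ya' - vproj n p = s • (ya - vproj n p) := by
        rw [hya']; abel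
      rw [hdiff, real_inner_smul_right] at hxY
      have hT : M < ⟪x, ya - vproj n p⟫ := by
        have e6 : ⟪x, ya - vproj n p⟫ = ⟪ya, x⟫ - ⟪vproj n p, x⟫ := by
          rw [inner_sub_right, real_inner_comm x ya, real_inner_comm x (vproj n p)]
        rw [hwlast, hxh, inner_add_right, inner_add_right] at hwc
        rw [e6, hM]
        linarith [hwc, hqh]
      have := mul_lt_mul_of_pos_left hT hs0
      linarith
    exact ⟨xh, ⟨w, ⟨by simp only [Set.mem_setOf_eq]; rw [hwproj, hwlast], hwV⟩, hwproj⟩,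
      by rw [hxh]; exact add_sub_cancel_right x (vproj n q)⟩

end
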